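/- For a > 1 and b ∈ ℝ, the Melnikov function M is differentiable on (0,∞) and its derivative M′(h) tends to -(3(a+1)² + 2b)·π as h → 0⁺; moreover M(h) tends to -(π/4)(a+1)²(5(a+1)² + 4b) as h → 0⁺. -/

import Mathlib

/-- The Melnikov function `M(h; a, b)` of the discontinuous SD oscillator. -/
noncomputable def Mel (a b h : ℝ) : ℝ :=
  -(Real.pi / 4) * (a + 1) ^ 2 * (5 * a ^ 2 + 10 * a + 4 * b + 5)
    - (15 * a ^ 2 + 4 * b + 5) * Real.sqrt h / Real.sqrt 2
    - (3 * a ^ 2 + 6 * a + 2 * b + 3) * Real.pi * h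
    - (13 * Real.sqrt 2 / 3) * (h * Real.sqrt h)
    - Real.pi * h ^ 2
    - (1 / 4) * (a ^ 2 - 2 * a + 2 * h + 1) * (5 * a ^ 2 - 10 * a + 4 * b + 2 * h + 5)
        * Real.arctan (Real.sqrt (2 * h) / (a - 1))
    + (1 / 4) * (a ^ 2 + 2 * a + 2 * h + 1) * (5 * a ^ 2 + 10 * a + 4 * b + 2 * h + 5)
        * Real.arctan (Real.sqrt (2 * h) / (a + 1))

/-- Explicit formula for the derivative of the Melnikov function. -/
noncomputable def MelD (a b h : ℝ) : ℝ :=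
  Real.sqrt (2 * h) / 2 - (3 * a ^ 2 + 6 * a + 2 * b + 3) * Real.pi
    - (13 * Real.sqrt 2 / 2) * Real.sqrt h - 2 * Real.pi * h
    - (1 / 2) * (6 * a ^ 2 - 12 * a + 4 * b + 4 * h + 6)
        * Real.arctan (Real.sqrt (2 * h) / (a - 1))
    + (1 / 2) * (6 * a ^ 2 + 12 * a + 4 * b + 4 * h + 6)
        * Real.arctan (Real.sqrt (2 * h) / (a + 1))

attribute [local fun_prop] Real.continuous_arctan

lemma melD_hasDerivAt (a b : ℝ) (ha : 1 < a) {h : ℝ} (hh : 0 < h) :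
    HasDerivAt (Mel a b) (MelD a b h) h := by
  have h2h : (0:ℝ) < 2 * h := by linarith
  have hsp : 0 < Real.sqrt h := Real.sqrt_pos.2 hh
  have htp : 0 < Real.sqrt (2 * h) := Real.sqrt_pos.2 h2h
  have hu : (0:ℝ) < Real.sqrt 2 := Real.sqrt_pos.2 (by norm_num)
  have hc1 : a - 1 ≠ 0 := by intro hc; nlinarith
  have hc2 : a + 1 ≠ 0 := by intro hc; nlinarith
  have hsqrt := Real.hasDerivAt_sqrt hh.ne'
  have hinner : HasDerivAt (fun x : ℝ => 2 * x) 2 h := by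
    simpa using (hasDerivAt_id h).const_mul (2:ℝ)
  have hsqrt2h : HasDerivAt (fun x : ℝ => Real.sqrt (2 * x)) (1 / Real.sqrt (2 * h)) h := by
    have H := (Real.hasDerivAt_sqrt h2h.ne').comp h hinner
    refine H.congr_deriv ?_
    field_simp
  have hA : ∀ c : ℝ, HasDerivAt (fun x : ℝ => Real.arctan (Real.sqrt (2 * x) / c))
      (1 / (1 + (Real.sqrt (2 * h) / c) ^ 2) * (1 / Real.sqrt (2 * h) / c)) h :=
    fun c => (Real.hasDerivAt_arctan _).comp h (hsqrt2h.div_const c)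
  have hP₁ : HasDerivAt (fun x : ℝ => a ^ 2 - 2 * a + 2 * x + 1) 2 h := by
    simpa using ((((hasDerivAt_id h).const_mul (2:ℝ)).const_add (a ^ 2 - 2 * a)).add_const 1)
  have hQ₁ : HasDerivAt (fun x : ℝ => 5 * a ^ 2 - 10 * a + 4 * b + 2 * x + 5) 2 h := by
    simpa using ((((hasDerivAt_id h).const_mul (2:ℝ)).const_add
      (5 * a ^ 2 - 10 * a + 4 * b)).add_const 5)
  have hP₂ : HasDerivAt (fun x : ℝ => a ^ 2 + 2 * a + 2 * x + 1) 2 h := by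
    simpa using ((((hasDerivAt_id h).const_mul (2:ℝ)).const_add (a ^ 2 + 2 * a)).add_const 1)
  have hQ₂ : HasDerivAt (fun x : ℝ => 5 * a ^ 2 + 10 * a + 4 * b + 2 * x + 5) 2 h := by
    simpa using ((((hasDerivAt_id h).const_mul (2:ℝ)).const_add
      (5 * a ^ 2 + 10 * a + 4 * b)).add_const 5)
  -- simplified derivative of the second term
  have h2' : HasDerivAt (fun x : ℝ => (15 * a ^ 2 + 4 * b + 5) * Real.sqrt x / Real.sqrt 2)
      ((15 * a ^ 2 + 4 * b + 5) / (2 * Real.sqrt (2 * h))) h := by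
    have H := (hsqrt.const_mul (15 * a ^ 2 + 4 * b + 5)).div_const (Real.sqrt 2)
    refine H.congr_deriv ?_
    rw [Real.sqrt_mul (by norm_num : (0:ℝ) ≤ 2) h]
    ring
  -- simplified derivative of the fourth term
  have h4' : HasDerivAt (fun x : ℝ => (13 * Real.sqrt 2 / 3) * (x * Real.sqrt x))
      ((13 * Real.sqrt 2 / 2) * Real.sqrt h) h := by
    have H := ((hasDerivAt_id h).mul hsqrt).const_mul (13 * Real.sqrt 2 / 3)
    refine H.congr_deriv ?_
    simp only [id, Pi.mul_apply]
    have hs2 : Real.sqrt h ^ 2 = h := Real.sq_sqrt hh.le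
    set s := Real.sqrt h with hsdef
    rw [show h = s ^ 2 by linarith]
    field_simp
    ring
  -- simplified derivative of the first arctan term
  have h6 : HasDerivAt (fun x : ℝ => (1 / 4) * (a ^ 2 - 2 * a + 2 * x + 1)
      * (5 * a ^ 2 - 10 * a + 4 * b + 2 * x + 5) * Real.arctan (Real.sqrt (2 * x) / (a - 1)))
      ((1 / 2) * (6 * a ^ 2 - 12 * a + 4 * b + 4 * h + 6)
          * Real.arctan (Real.sqrt (2 * h) / (a - 1))
        + (a - 1) * (5 * a ^ 2 - 10 * a + 4 * b + 2 * h + 5) / (4 * Real.sqrt (2 * h))) h := by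
    have H := ((hP₁.const_mul (1/4 : ℝ)).mul hQ₁).mul (hA (a - 1))
    refine H.congr_deriv ?_
    simp only [id, Pi.mul_apply]
    have ht2 : Real.sqrt (2 * h) ^ 2 = 2 * h := Real.sq_sqrt h2h.le
    set t := Real.sqrt (2 * h) with htdef
    have h1 : 1 + (t / (a - 1)) ^ 2 ≠ 0 := by positivity
    rw [show h = t ^ 2 / 2 by linarith]
    field_simp
    ring
  -- simplified derivative of the second arctan term
  have h7 : HasDerivAt (fun x : ℝ => (1 / 4) * (a ^ 2 + 2 * a + 2 * x + 1)
      * (5 * a ^ 2 + 10 * a + 4 * b + 2 * x + 5) * Real.arctan (Real.sqrt (2 * x) / (a + 1)))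
      ((1 / 2) * (6 * a ^ 2 + 12 * a + 4 * b + 4 * h + 6)
          * Real.arctan (Real.sqrt (2 * h) / (a + 1))
        + (a + 1) * (5 * a ^ 2 + 10 * a + 4 * b + 2 * h + 5) / (4 * Real.sqrt (2 * h))) h := by
    have H := ((hP₂.const_mul (1/4 : ℝ)).mul hQ₂).mul (hA (a + 1))
    refine H.congr_deriv ?_
    simp only [id, Pi.mul_apply]
    have ht2 : Real.sqrt (2 * h) ^ 2 = 2 * h := Real.sq_sqrt h2h.le
    set t := Real.sqrt (2 * h) with htdef
    have h1 : 1 + (t / (a + 1)) ^ 2 ≠ 0 := by positivity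
    rw [show h = t ^ 2 / 2 by linarith]
    field_simp
    ring
  have h0 := hasDerivAt_const h
    (-(Real.pi / 4) * (a + 1) ^ 2 * (5 * a ^ 2 + 10 * a + 4 * b + 5))
  have h3 := (hasDerivAt_id h).const_mul ((3 * a ^ 2 + 6 * a + 2 * b + 3) * Real.pi)
  have h5 := (hasDerivAt_pow 2 h).const_mul Real.pi
  have H := (((((h0.sub h2').sub h3).sub h4').sub h5).sub h6).add h7
  unfold Mel
  refine H.congr_deriv ?_
  unfold MelD
  simp only [id, mul_one, Nat.cast_ofNat]
  norm_num [-Real.sqrt_mul, -Real.sqrt_mul']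
  have ht2 : Real.sqrt (2 * h) ^ 2 = 2 * h := Real.sq_sqrt h2h.le
  set t := Real.sqrt (2 * h) with htdef
  rw [show h = t ^ 2 / 2 by linarith]
  field_simp
  ring

/-- `M` is differentiable on `(0, ∞)`; `M'(h) → -(3(a+1)² + 2b)π` and
`M(h) → -(π/4)(a+1)²(5(a+1)² + 4b)` as `h → 0⁺`. -/
theorem melnikov_differentiable_and_limits (a b : ℝ) (ha : 1 < a) :
    (∀ h : ℝ, 0 < h → DifferentiableAt ℝ (Mel a b) h) ∧
    Filter.Tendsto (deriv (Mel a b)) (nhdsWithin 0 (Set.Ioi 0))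
      (nhds (-(3 * (a + 1) ^ 2 + 2 * b) * Real.pi)) ∧
    Filter.Tendsto (Mel a b) (nhdsWithin 0 (Set.Ioi 0))
      (nhds (-(Real.pi / 4) * (a + 1) ^ 2 * (5 * (a + 1) ^ 2 + 4 * b))) := by
  refine ⟨fun h hh => (melD_hasDerivAt a b ha hh).differentiableAt, ?_, ?_⟩
  · have hc : Continuous (MelD a b) := by
      unfold MelD
      fun_prop
    have hval : MelD a b 0 = -(3 * (a + 1) ^ 2 + 2 * b) * Real.pi := by
      unfold MelD
      simp only [mul_zero, Real.sqrt_zero, zero_div, Real.arctan_zero]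
      ring
    have htend : Filter.Tendsto (MelD a b) (nhdsWithin 0 (Set.Ioi 0))
        (nhds (-(3 * (a + 1) ^ 2 + 2 * b) * Real.pi)) := by
      have := (hc.continuousAt (x := (0:ℝ))).continuousWithinAt (s := Set.Ioi 0)
      rw [ContinuousWithinAt, hval] at this
      exact this
    refine htend.congr' ?_
    filter_upwards [self_mem_nhdsWithin] with x hx
    exact ((melD_hasDerivAt a b ha hx).deriv).symm
  · have hc : Continuous (Mel a b) := by
      unfold Mel
      fun_prop
    have hval : Mel a b 0 = -(Real.pi / 4) * (a + 1) ^ 2 * (5 * (a + 1) ^ 2 + 4 * b) := by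
      unfold Mel
      simp only [mul_zero, Real.sqrt_zero, zero_div, Real.arctan_zero]
      ring
    have := (hc.continuousAt (x := (0:ℝ))).continuousWithinAt (s := Set.Ioi 0)
    rw [ContinuousWithinAt, hval] at this
    exact this
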